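/- arXiv:1507.02170 — 6 statements merged into one kernel-verified Lean document; each statement's English description precedes it below -/
import Mathlib

section
/- Let G be a nonabelian simple group containing an involution h and an element g such that {g, g^h} generates G. Then g⁻¹ ∉ {g, hg, gh, hgh}. -/
/-- Helper: if `x*x = 1` and `x*c*x = c⁻¹`, then `x` normalizes `⟨c⟩`. -/
lemma stmt_4_norm_helper {G : Type*} [Group G] {c x : G} (hx : x * x = 1)
    (hc : x * c * x = c⁻¹) : x ∈ Subgroup.normalizer (Subgroup.zpowers c : Set G) := by
  have hxinv : x⁻¹ = x := by
    rw [inv_eq_iff_mul_eq_one, hx]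
  have hconj : x * c * x⁻¹ = c⁻¹ := by rw [hxinv]; exact hc
  rw [Subgroup.mem_normalizer_iff]
  intro y
  simp only [Subgroup.mem_zpowers_iff]
  constructor
  · rintro ⟨k, rfl⟩
    exact ⟨-k, by rw [zpow_neg, ← inv_zpow, ← hconj, conj_zpow]⟩
  · rintro ⟨k, hk⟩
    refine ⟨-k, ?_⟩
    have h2 : x * c ^ (-k) * x⁻¹ = x * y * x⁻¹ := by
      rw [← hk, ← conj_zpow, hconj, inv_zpow, ← zpow_neg, neg_neg]
    exact mul_left_cancel (mul_right_cancel h2)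

/-- Helper: if the closure of `{a, b}` is `⊤` and `b ∈ zpowers a`, then
the group is abelian-generated, contradicting nonabelianness. -/
lemma stmt_4_cyclic_helper {G : Type*} [Group G] {a b : G}
    (hgen : Subgroup.closure {a, b} = ⊤) (hb : b ∈ Subgroup.zpowers a)
    (x y : G) : x * y = y * x := by
  have hle : Subgroup.closure {a, b} ≤ Subgroup.zpowers a := by
    rw [Subgroup.closure_le]
    intro z hz
    simp only [Set.mem_insert_iff, Set.mem_singleton_iff] at hz
    rcases hz with rfl | rfl
    · exact Subgroup.mem_zpowers _
    · exact hb
  rw [hgen] at hle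
  obtain ⟨m, hm⟩ := hle (Subgroup.mem_top x)
  obtain ⟨n, hn⟩ := hle (Subgroup.mem_top y)
  rw [← hm, ← hn, ← zpow_add, ← zpow_add, add_comm]

/-- If a finite nonabelian simple group `G` contains an involution `h` and an
element `g` with `⟨g, g^h⟩ = G`, then `g⁻¹ ∉ {g, hg, gh, hgh}` (the double
coset `⟨h⟩g⟨h⟩`). -/
theorem stmt_4 {G : Type*} [Group G] [Finite G] [IsSimpleGroup G]
    (hnab : ∃ x y : G, x * y ≠ y * x)
    (h g : G) (hh2 : h ^ 2 = 1) (hh1 : h ≠ 1)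
    (hgen : Subgroup.closure {g, h⁻¹ * g * h} = ⊤) :
    g⁻¹ ∉ ({g, h * g, g * h, h * g * h} : Set G) := by
  obtain ⟨x, y, hxy⟩ := hnab
  have hhh : h * h = 1 := by rw [← sq]; exact hh2
  have hhinv : h⁻¹ = h := by rw [inv_eq_iff_mul_eq_one, hhh]
  rintro (hc | hc | hc | hc)
  · -- g⁻¹ = g, so g² = 1; two-involutions case
    have hg2 : g * g = 1 := by nth_rewrite 1 [← hc]; exact inv_mul_cancel g
    set b := h⁻¹ * g * h with hb
    have hb2 : b * b = 1 := by
      simp only [hb, hhinv]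
      calc h * g * h * (h * g * h) = h * g * (h * h) * g * h := by group
      _ = h * (g * g) * h := by rw [hhh]; group
      _ = 1 := by rw [hg2, mul_one, hhh]
    have hbinv : b⁻¹ = b := by rw [inv_eq_iff_mul_eq_one, hb2]
    have hginv : g⁻¹ = g := hc
    -- N = zpowers (g * b) is normal
    set c := g * b with hcdef
    have hga : g * c * g = c⁻¹ := by
      rw [hcdef, mul_inv_rev, hbinv, hginv]
      calc g * (g * b) * g = (g * g) * b * g := by group
      _ = b * g := by rw [hg2]; group
    have hba : b * c * b = c⁻¹ := by
      rw [hcdef, mul_inv_rev, hbinv, hginv]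
      calc b * (g * b) * b = b * g * (b * b) := by group
      _ = b * g := by rw [hb2]; group
    have hnorm : Subgroup.normalizer (Subgroup.zpowers c : Set G) = ⊤ := by
      rw [eq_top_iff, ← hgen, Subgroup.closure_le]
      rintro z (rfl | rfl)
      · exact stmt_4_norm_helper hg2 hga
      · exact stmt_4_norm_helper hb2 hba
    have hN : (Subgroup.zpowers c).Normal := Subgroup.normalizer_eq_top_iff.mp hnorm
    rcases IsSimpleGroup.eq_bot_or_eq_top_of_normal (Subgroup.zpowers c) hN with hbot | htop
    · -- c = 1, so b = g⁻¹ = g, closure {g} = ⊤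
      have hc1 : c = 1 := by
        have := Subgroup.mem_zpowers c
        rw [hbot, Subgroup.mem_bot] at this
        exact this
      have hbg : b = g := by
        have : g * b = 1 := hc1
        calc b = g⁻¹ * (g * b) := by group
        _ = g⁻¹ := by rw [this, mul_one]
        _ = g := hginv
      exact hxy (stmt_4_cyclic_helper hgen (hbg ▸ Subgroup.mem_zpowers g) x y)
    · -- everything is a power of c → abelian
      have hx' := htop ▸ Subgroup.mem_top x
      have hy' := htop ▸ Subgroup.mem_top y
      obtain ⟨m, hm⟩ := hx'
      obtain ⟨n, hn⟩ := hy'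
      exact hxy (by rw [← hm, ← hn, ← zpow_add, ← zpow_add, add_comm])
  · -- g⁻¹ = h * g : h = g⁻²
    have hh' : h = g⁻¹ * g⁻¹ := by
      calc h = (h * g) * g⁻¹ := by group
      _ = g⁻¹ * g⁻¹ := by rw [← hc]
    have : h⁻¹ * g * h ∈ Subgroup.zpowers g := by
      refine ⟨1, ?_⟩
      rw [hh']
      group
    exact hxy (stmt_4_cyclic_helper hgen this x y)
  · -- g⁻¹ = g * h : h = g⁻²
    have hh' : h = g⁻¹ * g⁻¹ := by
      calc h = g⁻¹ * (g * h) := by group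
      _ = g⁻¹ * g⁻¹ := by rw [← hc]
    have : h⁻¹ * g * h ∈ Subgroup.zpowers g := by
      refine ⟨1, ?_⟩
      rw [hh']
      group
    exact hxy (stmt_4_cyclic_helper hgen this x y)
  · -- g⁻¹ = h * g * h : g^h = g⁻¹
    have : h⁻¹ * g * h ∈ Subgroup.zpowers g := by
      refine ⟨-1, ?_⟩
      rw [hhinv, ← hc]
      group
    exact hxy (stmt_4_cyclic_helper hgen this x y)
end

section
/- Let n ≥ 5 be odd, m = (n-1)/2, and in Sym(n) let H = ⟨(i, i+m) : i = 1, …, m⟩ and g = (1, 2, …, n) the n-cycle. Then ⟨H, g⟩ = Sym(n). -/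
/-- For odd `n ≥ 5` and `m = (n-1)/2`, the subgroup of `Sym(n)` generated by
the transpositions `(i, i+m)` for `i = 1, …, m` together with the `n`-cycle
`(1 2 … n)` is all of `Sym(n)`. (Points are indexed by `Fin n`, so the
transpositions are `swap a b` with `a < m`, `b = a + m`, and the `n`-cycle is
`finRotate n`.) -/
theorem stmt_6 (n m : ℕ) (hn : Odd n) (h5 : 5 ≤ n) (hm : m = (n - 1) / 2) :
    Subgroup.closure {σ : Equiv.Perm (Fin n) |
        ∃ a b : Fin n, (a : ℕ) < m ∧ (b : ℕ) = (a : ℕ) + m ∧ σ = Equiv.swap a b}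
      ⊔ Subgroup.zpowers (finRotate n) = ⊤ := by
  obtain ⟨k, hk⟩ := hn
  have hnk : n = 2 * k + 1 := by omega
  subst hnk
  have hmk : m = k := by omega
  have hcop : Nat.Coprime m (Fintype.card (Fin (2 * k + 1))) := by
    rw [Fintype.card_fin, hmk]
    have : Nat.gcd k (2 * k + 1) = Nat.gcd k 1 := by
      have := Nat.gcd_add_mul_right_right k 1 2
      simpa [add_comm] using this
    simpa [Nat.Coprime] using this
  open Fin.NatCast in
  have hpow : ∀ j : ℕ, ((finRotate (2 * k + 1)) ^ j) 0 = (j : Fin (2 * k + 1)) := by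
    intro j
    induction j with
    | zero => simp
    | succ j ih =>
      rw [pow_succ', Equiv.Perm.mul_apply, ih, finRotate_succ_apply]
      push_cast
      ring
  have hb : (((finRotate (2 * k + 1)) ^ m) 0 : Fin (2 * k + 1)).val = m := by
    rw [hpow m]
    have hlt : m < 2 * k + 1 := by omega
    simp [Fin.val_natCast, Nat.mod_eq_of_lt hlt]
  have hkey := Equiv.Perm.closure_cycle_coprime_swap hcop
    (isCycle_finRotate_of_le (by omega))
    (support_finRotate_of_le (by omega)) (0 : Fin (2 * k + 1))
  rw [eq_top_iff, ← hkey, Subgroup.closure_le]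
  rintro σ (rfl | rfl)
  · exact Subgroup.mem_sup_right (Subgroup.mem_zpowers _)
  · refine Subgroup.mem_sup_left (Subgroup.subset_closure ?_)
    refine ⟨0, _, ?_, ?_, rfl⟩
    · simpa using (by omega : 0 < m)
    · simpa using hb
end

section
/- Let n ≥ 5 be odd, m = (n-1)/2, H = ⟨(i, i+m) : i = 1, …, m⟩ ≤ Sym(n), and g = (1, 2, …, n). Then g⁻¹ ∉ HgH. -/
set_option maxHeartbeats 1000000 in
/-- For odd `n ≥ 5`, `m = (n-1)/2`, `H = ⟨(i, i+m) : i = 1, …, m⟩ ≤ Sym(n)`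
and `g = (1 2 … n)`, we have `g⁻¹ ∉ HgH`. -/
theorem stmt_8 (n m : ℕ) (hn : Odd n) (h5 : 5 ≤ n) (hm : m = (n - 1) / 2)
    (H : Subgroup (Equiv.Perm (Fin n)))
    (hH : H = Subgroup.closure {σ | ∃ a b : Fin n,
      (a : ℕ) < m ∧ (b : ℕ) = (a : ℕ) + m ∧ σ = Equiv.swap a b})
    (g : Equiv.Perm (Fin n)) (hg : g = finRotate n) :
    ¬ ∃ h ∈ H, ∃ h' ∈ H, g⁻¹ = h * g * h' := by
  rintro ⟨h, hh, h', hh', heq⟩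
  subst hg hH
  obtain ⟨k, rfl⟩ : ∃ k, n = k + 1 := ⟨n - 1, by omega⟩
  have hk : k = 2 * m := by
    obtain ⟨t, ht⟩ := hn
    omega
  have hm2 : 2 ≤ m := by omega
  -- key points
  set N : Fin (k + 1) := ⟨k, by omega⟩ with hN
  set Z : Fin (k + 1) := ⟨0, by omega⟩ with hZ
  set M : Fin (k + 1) := ⟨m, by omega⟩ with hM
  have hNv : (N : ℕ) = k := rfl
  have hZv : (Z : ℕ) = 0 := rfl
  have hMv : (M : ℕ) = m := rfl
  set S : Set (Equiv.Perm (Fin (k+1))) := {σ | ∃ a b : Fin (k+1),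
      (a : ℕ) < m ∧ (b : ℕ) = (a : ℕ) + m ∧ σ = Equiv.swap a b} with hS
  -- every element of H fixes N
  have fixN : ∀ σ ∈ Subgroup.closure S, σ N = N := by
    intro σ hσ
    induction hσ using Subgroup.closure_induction with
    | mem x hx =>
      obtain ⟨a, b, ha, hb, rfl⟩ := hx
      apply Equiv.swap_apply_of_ne_of_ne
      · intro hcon
        have : (N : ℕ) = (a : ℕ) := congrArg Fin.val hcon
        omega
      · intro hcon
        have : (N : ℕ) = (b : ℕ) := congrArg Fin.val hcon
        omega
    | one => rfl
    | mul x y hx hy px py => simp only [Equiv.Perm.mul_apply, py, px]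
    | inv x hx px => exact Equiv.Perm.inv_eq_iff_eq.mpr px.symm
  -- orbit of Z under H is {Z, M}
  have orb : ∀ σ ∈ Subgroup.closure S,
      (σ Z = Z ∨ σ Z = M) ∧ (σ M = Z ∨ σ M = M) := by
    intro σ hσ
    induction hσ using Subgroup.closure_induction with
    | mem x hx =>
      obtain ⟨a, b, ha, hb, rfl⟩ := hx
      by_cases h0 : (a : ℕ) = 0
      · have haZ : a = Z := Fin.ext (by omega)
        have hbM : b = M := Fin.ext (by omega)
        subst haZ hbM
        exact ⟨Or.inr (Equiv.swap_apply_left _ _), Or.inl (Equiv.swap_apply_right _ _)⟩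
      · constructor
        · left
          apply Equiv.swap_apply_of_ne_of_ne
          · intro hcon
            have : (Z : ℕ) = (a : ℕ) := congrArg Fin.val hcon
            omega
          · intro hcon
            have : (Z : ℕ) = (b : ℕ) := congrArg Fin.val hcon
            omega
        · right
          apply Equiv.swap_apply_of_ne_of_ne
          · intro hcon
            have : (M : ℕ) = (a : ℕ) := congrArg Fin.val hcon
            omega
          · intro hcon
            have : (M : ℕ) = (b : ℕ) := congrArg Fin.val hcon
            omega
    | one => exact ⟨Or.inl rfl, Or.inr rfl⟩
    | mul x y hx hy px py =>
      constructor
      · rcases py.1 with h1 | h1 <;> simp only [Equiv.Perm.mul_apply, h1] <;> tauto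
      · rcases py.2 with h1 | h1 <;> simp only [Equiv.Perm.mul_apply, h1] <;> tauto
    | inv x hx px =>
      have hZM : Z ≠ M := by
        intro hcon
        have : (Z : ℕ) = (M : ℕ) := congrArg Fin.val hcon
        omega
      rcases px.1 with h1 | h1 <;> rcases px.2 with h2 | h2
      · exact absurd (x.injective (h1.trans h2.symm)) hZM
      · exact ⟨Or.inl (Equiv.Perm.inv_eq_iff_eq.mpr h1.symm),
          Or.inr (Equiv.Perm.inv_eq_iff_eq.mpr h2.symm)⟩
      · exact ⟨Or.inr (Equiv.Perm.inv_eq_iff_eq.mpr h2.symm),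
          Or.inl (Equiv.Perm.inv_eq_iff_eq.mpr h1.symm)⟩
      · exact absurd (x.injective (h1.trans h2.symm)) hZM
  -- g * h * g = h'⁻¹ ∈ H
  have key : finRotate (k+1) * h * finRotate (k+1) = h'⁻¹ := by
    have h1 : (finRotate (k+1) * h * finRotate (k+1)) * h' = 1 := by
      calc (finRotate (k+1) * h * finRotate (k+1)) * h'
          = finRotate (k+1) * (h * finRotate (k+1) * h') := by group
        _ = finRotate (k+1) * (finRotate (k+1))⁻¹ := by rw [← heq]
        _ = 1 := mul_inv_cancel _
    exact eq_inv_of_mul_eq_one_left h1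
  have hmem : finRotate (k+1) * h * finRotate (k+1) ∈ Subgroup.closure S := by
    rw [key]; exact inv_mem hh'
  have hfix := fixN _ hmem
  have hgN : finRotate (k+1) N = Z := by
    have hNl : N = Fin.last k := rfl
    rw [hNl, finRotate_succ_apply, Fin.last_add_one]
    rfl
  rw [Equiv.Perm.mul_apply, Equiv.Perm.mul_apply, hgN] at hfix
  rcases (orb h hh).1 with h1 | h1 <;> rw [h1, finRotate_succ_apply] at hfix
  · have hlt : Z < Fin.last k := by
      rw [Fin.lt_def, Fin.val_last]
      omega
    have hv := congrArg Fin.val hfix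
    rw [Fin.val_add_one_of_lt hlt] at hv
    omega
  · have hlt : M < Fin.last k := by
      rw [Fin.lt_def, Fin.val_last]
      omega
    have hv := congrArg Fin.val hfix
    rw [Fin.val_add_one_of_lt hlt] at hv
    omega
end

section
/- Let Γ be a connected graph, G ≤ Aut(Γ) vertex-transitive, and N ◁ G. Suppose that for every vertex x, the neighbours of x lie in pairwise distinct N-orbits. If K ◁ G contains N and has the same orbits on vertices as N, then the stabiliser K_x is trivial for every vertex x; in particular K is semiregular on vertices. -/
/-- Let `Γ` be a connected graph, `G` a group acting faithfully on the
vertices by graph automorphisms and vertex-transitively, and let `N ≤ K` be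
normal subgroups of `G` with the same vertex orbits. If for every vertex the
neighbours lie in pairwise distinct `N`-orbits (all different from the orbit
of the vertex itself), then every vertex stabiliser in `K` is trivial; in
particular `K` is semiregular on vertices. -/
theorem stmt_13 {V : Type*} (Γ : SimpleGraph V) (hconn : Γ.Connected)
    {G : Type*} [Group G] [MulAction G V] [FaithfulSMul G V]
    (haut : ∀ (g : G) (x y : V), Γ.Adj x y → Γ.Adj (g • x) (g • y))
    (htrans : MulAction.IsPretransitive G V)
    (N K : Subgroup G) (hNn : N.Normal) (hKn : K.Normal) (hNK : N ≤ K)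
    (horb : ∀ x : V, MulAction.orbit N x = MulAction.orbit K x)
    (hnbr1 : ∀ x y z : V, Γ.Adj x y → Γ.Adj x z → y ≠ z →
      MulAction.orbit N y ≠ MulAction.orbit N z)
    (hnbr2 : ∀ x y : V, Γ.Adj x y → MulAction.orbit N x ≠ MulAction.orbit N y) :
    ∀ (x : V) (k : G), k ∈ K → k • x = x → k = 1 := by
  intro x k hk hkx
  have key : ∀ a b : V, Γ.Adj a b → k • a = a → k • b = b := by
    intro a b hab hka
    by_contra hne
    have hadj' : Γ.Adj a (k • b) := by
      have := haut k a b hab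
      rwa [hka] at this
    have hmem : k • b ∈ MulAction.orbit N b := by
      rw [horb b]
      exact ⟨⟨k, hk⟩, rfl⟩
    have : MulAction.orbit N b = MulAction.orbit N (k • b) :=
      (MulAction.orbit_eq_iff.mpr hmem).symm
    exact hnbr1 a b (k • b) hab hadj' (fun h => hne h.symm) this
  have fix : ∀ a b : V, Γ.Reachable a b → k • a = a → k • b = b := by
    intro a b ⟨w⟩
    induction w with
    | nil => exact fun h => h
    | cons h _ ih => exact fun ha => ih (key _ _ h ha)
  have hall : ∀ y : V, k • y = y := fun y => fix x y (hconn x y) hkx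
  have : ∀ y : V, k • y = (1 : G) • y := by simp [hall]
  exact FaithfulSMul.eq_of_smul_eq_smul this
end

section
/- Let G be a group acting on a set X, transitive on s-arcs of a G-oriented 2-out-regular digraph but not transitive on (s+1)-arcs. Then the pointwise stabiliser H of any s-arc (x₀, …, x_s) fixes both out-neighbours of x_s. -/
/-- Let `G` act on `X` preserving a relation `Δ` in which every point has
exactly two out-neighbours, with `G` transitive on `s`-arcs but not on
`(s+1)`-arcs. Then the pointwise stabiliser of any `s`-arc `(x₀, …, x_s)`
fixes both out-neighbours of `x_s`. -/
theorem stmt_15 {G X : Type*} [Group G] [MulAction G X]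
    (Δ : X → X → Prop)
    (hinv : ∀ (g : G) (x y : X), Δ x y → Δ (g • x) (g • y))
    (hout : ∀ x : X, Nat.card {y : X // Δ x y} = 2)
    (s : ℕ)
    (htrans : ∀ f f' : Fin (s + 1) → X,
      (∀ i : Fin s, Δ (f i.castSucc) (f i.succ)) →
      (∀ i : Fin s, Δ (f' i.castSucc) (f' i.succ)) →
      ∃ g : G, g • f = f')
    (hnottrans : ¬ ∀ f f' : Fin (s + 2) → X,
      (∀ i : Fin (s + 1), Δ (f i.castSucc) (f i.succ)) →
      (∀ i : Fin (s + 1), Δ (f' i.castSucc) (f' i.succ)) →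
      ∃ g : G, g • f = f')
    (f : Fin (s + 1) → X) (hf : ∀ i : Fin s, Δ (f i.castSucc) (f i.succ))
    (h : G) (hfix : ∀ i, h • f i = f i) :
    ∀ y : X, Δ (f (Fin.last s)) y → h • y = y := by
  -- two-element lemma
  have two : ∀ (x u v w : X), Δ x u → Δ x v → Δ x w → u ≠ v → w ≠ v → u = w := by
    intro x u v w hu hv hw huv hwv
    obtain ⟨a, b, hab, hcover⟩ := Nat.card_eq_two_iff.mp (hout x)
    have hall : ∀ c : {y : X // Δ x y}, c = a ∨ c = b := by
      intro c
      have : c ∈ ({a, b} : Set {y : X // Δ x y}) := by rw [hcover]; trivial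
      simpa using this
    have hu' := hall ⟨u, hu⟩
    have hv' := hall ⟨v, hv⟩
    have hw' := hall ⟨w, hw⟩
    rcases hu' with hu' | hu' <;> rcases hv' with hv' | hv' <;>
      rcases hw' with hw' | hw' <;>
      simp_all [Subtype.ext_iff]
  intro y hy
  by_contra hne
  apply hnottrans
  intro F F' hF hF'
  set Fr : Fin (s + 1) → X := fun i => F i.castSucc with hFr
  set F'r : Fin (s + 1) → X := fun i => F' i.castSucc with hF'r
  have hFrarc : ∀ i : Fin s, Δ (Fr i.castSucc) (Fr i.succ) := by
    intro i
    have := hF i.castSucc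
    rw [Fin.succ_castSucc] at this; exact this
  have hF'rarc : ∀ i : Fin s, Δ (F'r i.castSucc) (F'r i.succ) := by
    intro i
    have := hF' i.castSucc
    rw [Fin.succ_castSucc] at this; exact this
  obtain ⟨g, hg⟩ := htrans Fr F'r hFrarc hF'rarc
  obtain ⟨k, hk⟩ := htrans f F'r hf hF'rarc
  have hg' : ∀ i : Fin (s + 1), g • Fr i = F'r i := fun i => congrFun hg i
  have hk' : ∀ i : Fin (s + 1), k • f i = F'r i := fun i => congrFun hk i
  set h' : G := k * h * k⁻¹ with hh'
  have hh'fix : ∀ i : Fin (s + 1), h' • F'r i = F'r i := by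
    intro i
    rw [← hk' i, hh', mul_smul, mul_smul, inv_smul_smul, hfix]
  set x' : X := F'r (Fin.last s) with hx'
  have hx'fix : h' • x' = x' := hh'fix _
  -- the two conjugated out-neighbours
  have hky : Δ x' (k • y) := by
    have := hinv k _ _ hy
    rwa [hk'] at this
  have hky2 : Δ x' (h' • (k • y)) := by
    have := hinv h' _ _ hky
    rwa [hx'fix] at this
  have hkyne : h' • (k • y) ≠ k • y := by
    intro hc
    apply hne
    have : h' • (k • y) = k • (h • y) := by
      rw [hh', mul_smul, mul_smul, inv_smul_smul]
    rw [this] at hc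
    exact smul_left_cancel k hc
  -- w₁ and w₂
  set w₁ : X := g • F (Fin.last (s + 1)) with hw₁
  set w₂ : X := F' (Fin.last (s + 1)) with hw₂
  have hlast : (Fin.last s).succ = Fin.last (s + 1) := rfl
  have hw₁Δ : Δ x' w₁ := by
    have := hinv g _ _ (hF (Fin.last s))
    rw [hlast] at this
    have h2 : g • F (Fin.last s).castSucc = x' := hg' (Fin.last s)
    rwa [h2] at this
  have hw₂Δ : Δ x' w₂ := by
    have := hF' (Fin.last s)
    rwa [hlast] at this
  by_cases hcase : w₁ = w₂
  · refine ⟨g, funext fun i => ?_⟩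
    refine Fin.lastCases ?_ (fun j => ?_) i
    · show g • F (Fin.last (s + 1)) = F' (Fin.last (s + 1))
      exact hcase
    · show g • F j.castSucc = F' j.castSucc
      exact hg' j
  · -- h' moves w₁
    have hw₁move : h' • w₁ ≠ w₁ := by
      intro hc
      have halt : w₁ = k • y ∨ w₁ = h' • (k • y) := by
        rcases eq_or_ne w₁ (k • y) with h1 | h1
        · exact Or.inl h1
        · exact Or.inr (two x' w₁ (k • y) (h' • (k • y)) hw₁Δ hky hky2 h1 hkyne)
      rcases halt with h1 | h1
      · rw [h1] at hc; exact hkyne hc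
      · rw [h1] at hc
        exact hkyne (smul_left_cancel h' hc)
    have hw₁'Δ : Δ x' (h' • w₁) := by
      have := hinv h' _ _ hw₁Δ
      rwa [hx'fix] at this
    have key : h' • w₁ = w₂ := two x' (h' • w₁) w₁ w₂ hw₁'Δ hw₁Δ hw₂Δ hw₁move (Ne.symm hcase)
    refine ⟨h' * g, funext fun i => ?_⟩
    refine Fin.lastCases ?_ (fun j => ?_) i
    · show (h' * g) • F (Fin.last (s + 1)) = F' (Fin.last (s + 1))
      rw [mul_smul]
      exact key
    · show (h' * g) • F j.castSucc = F' j.castSucc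
      rw [mul_smul]
      have : g • F j.castSucc = F'r j := hg' j
      rw [this]
      exact hh'fix j
end

section
/- Let T be a finite nonabelian simple group, N = T × T, ι the swap automorphism of N, G = N ⋊ ⟨ι⟩. Suppose a ∈ T is an involution, b ∈ T, ⟨a, b⟩ = T, and b^g ≠ ba for every g ∈ Aut(T) centralizing a. Then N = ⟨(a, a), (b, ba)⟩. -/
/-- Let `T` be a finite nonabelian simple group, `a ∈ T` an involution,
`b ∈ T` with `⟨a, b⟩ = T`, and suppose `b^φ ≠ ba` for every automorphism `φ`
of `T` centralizing `a`. Then `(a, a)` and `(b, ba)` generate `T × T`. -/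
theorem stmt_16 {T : Type*} [Group T] [Finite T] [IsSimpleGroup T]
    (hnab : ∃ x y : T, x * y ≠ y * x)
    (a b : T) (ha2 : a ^ 2 = 1) (ha1 : a ≠ 1)
    (hgen : Subgroup.closure {a, b} = ⊤)
    (hb : ∀ φ : MulAut T, φ a = a → φ b ≠ b * a) :
    Subgroup.closure ({(a, a), (b, b * a)} : Set (T × T)) = ⊤ := by
  set H := Subgroup.closure ({(a, a), (b, b * a)} : Set (T × T)) with hHdef
  have haa : a * a = 1 := by rw [← sq]; exact ha2
  have haH : ((a, a) : T × T) ∈ H := Subgroup.subset_closure (by simp)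
  have hbH : ((b, b * a) : T × T) ∈ H := Subgroup.subset_closure (by simp)
  -- first projection is surjective
  have hmap1 : H.map (MonoidHom.fst T T) = ⊤ := by
    rw [hHdef, MonoidHom.map_closure]
    have : (MonoidHom.fst T T) '' {(a, a), (b, b * a)} = {a, b} := by
      simp [Set.image_insert_eq]
    rw [this, hgen]
  have hgen2 : Subgroup.closure ({a, b * a} : Set T) = ⊤ := by
    rw [eq_top_iff, ← hgen]
    rw [Subgroup.closure_le]
    intro x hx
    rcases hx with h | h
    · rw [h]; exact Subgroup.subset_closure (by simp)
    · simp only [Set.mem_singleton_iff] at h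
      rw [h]
      have hba : b * a ∈ Subgroup.closure ({a, b * a} : Set T) :=
        Subgroup.subset_closure (by simp)
      have haM : a ∈ Subgroup.closure ({a, b * a} : Set T) :=
        Subgroup.subset_closure (by simp)
      have : (b * a) * a ∈ Subgroup.closure ({a, b * a} : Set T) := mul_mem hba haM
      simpa [mul_assoc, haa] using this
  have hmap2 : H.map (MonoidHom.snd T T) = ⊤ := by
    rw [hHdef, MonoidHom.map_closure]
    have : (MonoidHom.snd T T) '' {(a, a), (b, b * a)} = {a, b * a} := by
      simp [Set.image_insert_eq]
    rw [this, hgen2]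
  have hfst : ∀ x : T, ∃ y, ((x, y) : T × T) ∈ H := by
    intro x
    have hx : x ∈ H.map (MonoidHom.fst T T) := hmap1 ▸ Subgroup.mem_top x
    rcases Subgroup.mem_map.mp hx with ⟨⟨p1, p2⟩, hp, hpx⟩
    have h1 : p1 = x := hpx
    exact ⟨p2, h1 ▸ hp⟩
  have hsnd : ∀ y : T, ∃ x, ((x, y) : T × T) ∈ H := by
    intro y
    have hy : y ∈ H.map (MonoidHom.snd T T) := hmap2 ▸ Subgroup.mem_top y
    rcases Subgroup.mem_map.mp hy with ⟨⟨p1, p2⟩, hp, hpy⟩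
    have h1 : p2 = y := hpy
    exact ⟨p1, h1 ▸ hp⟩
  -- the two "kernel" subgroups
  set K1 : Subgroup T := H.comap (MonoidHom.inl T T) with hK1def
  set K2 : Subgroup T := H.comap (MonoidHom.inr T T) with hK2def
  have hK1mem : ∀ x : T, x ∈ K1 ↔ ((x, 1) : T × T) ∈ H := fun x => Iff.rfl
  have hK2mem : ∀ y : T, y ∈ K2 ↔ ((1, y) : T × T) ∈ H := fun y => Iff.rfl
  have hK1n : K1.Normal := by
    constructor
    intro x hx t
    rcases hfst t with ⟨s, hs⟩
    have : ((t, s) : T × T) * (x, 1) * (t, s)⁻¹ ∈ H :=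
      mul_mem (mul_mem hs ((hK1mem x).mp hx)) (inv_mem hs)
    exact (hK1mem _).mpr (by simpa using this)
  have hK2n : K2.Normal := by
    constructor
    intro y hy t
    rcases hsnd t with ⟨s, hs⟩
    have : ((s, t) : T × T) * (1, y) * (s, t)⁻¹ ∈ H :=
      mul_mem (mul_mem hs ((hK2mem y).mp hy)) (inv_mem hs)
    exact (hK2mem _).mpr (by simpa using this)
  have hK1cases := IsSimpleGroup.eq_bot_or_eq_top_of_normal K1 hK1n
  have hK2cases := IsSimpleGroup.eq_bot_or_eq_top_of_normal K2 hK2n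
  rcases hK2cases with hK2 | hK2
  · rcases hK1cases with hK1 | hK1
    · -- both kernels trivial: graph of an automorphism, contradiction
      exfalso
      choose f hf using hfst
      have huniq : ∀ x y : T, ((x, y) : T × T) ∈ H → f x = y := by
        intro x y hy
        have hm : ((x, f x) : T × T)⁻¹ * (x, y) ∈ H := mul_mem (inv_mem (hf x)) hy
        have hm' : ((1, (f x)⁻¹ * y) : T × T) ∈ H := by simpa using hm
        have : (f x)⁻¹ * y ∈ K2 := (hK2mem _).mpr hm'
        rw [hK2] at this
        have : (f x)⁻¹ * y = 1 := Subgroup.mem_bot.mp this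
        exact (eq_of_inv_mul_eq_one this)
      have hf1 : f 1 = 1 := huniq 1 1 (one_mem H)
      have hfmul : ∀ x y : T, f (x * y) = f x * f y := by
        intro x y
        exact huniq (x * y) (f x * f y) (by simpa using mul_mem (hf x) (hf y))
      let F : T →* T := { toFun := f, map_one' := hf1, map_mul' := hfmul }
      have hFinj : Function.Injective F := by
        apply (injective_iff_map_eq_one F).mpr
        intro x hx
        have : ((x, 1) : T × T) ∈ H := by
          have := hf x
          simpa [show f x = 1 from hx] using this
        have : x ∈ K1 := (hK1mem x).mpr this
        rw [hK1] at this
        exact Subgroup.mem_bot.mp this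
      have hFbij : Function.Bijective F := Finite.injective_iff_bijective.mp hFinj
      let φ : MulAut T := MulEquiv.ofBijective F hFbij
      have hφa : φ a = a := huniq a a haH
      have hφb : φ b = b * a := huniq b (b * a) hbH
      exact hb φ hφa hφb
    · -- K1 = ⊤ : T × {1} ⊆ H
      rw [eq_top_iff]
      rintro ⟨x, y⟩ -
      rcases hsnd y with ⟨s, hs⟩
      have h1 : ((x * s⁻¹, 1) : T × T) ∈ H := (hK1mem _).mp (hK1 ▸ Subgroup.mem_top _)
      have := mul_mem h1 hs
      simpa [mul_assoc] using this
  · -- K2 = ⊤ : {1} × T ⊆ H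
    rw [eq_top_iff]
    rintro ⟨x, y⟩ -
    rcases hfst x with ⟨t, ht⟩
    have h1 : ((1, (t)⁻¹ * y) : T × T) ∈ H := (hK2mem _).mp (hK2 ▸ Subgroup.mem_top _)
    have := mul_mem ht h1
    simpa [mul_assoc] using this
end
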